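/- Let d ≥ 0, k ≥ 3 and (t_r)_{r≥2} nonnegative integers. Assume the Hirzebruch-type inequality 5k + t_2 + t_3 ≥ d + Σ_{r≥5}(r-4)t_r, and assume the denominator 3 - 2d - 2k + Σ_{r≥2}(r-1)t_r is positive. Then γ = (9 - 8k - 5d + Σ_{r≥2}(3r-4)t_r)/(3 - 2d - 2k + Σ_{r≥2}(r-1)t_r) < 8/3. -/

import Mathlib

open Finset

/-- Conic-line arrangements: the Hirzebruch-type inequality of Pardini–Pokora forces
the characteristic number to be `< 8/3`. -/
theorem stmt_7 (d k N : ℕ) (t : ℕ → ℕ) (hk : 3 ≤ k)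
    (hsupp : ∀ r, N < r → t r = 0)
    (hHir : (5 * k + t 2 + t 3 : ℤ) ≥ d + ∑ r ∈ Finset.Icc 5 N, ((r : ℤ) - 4) * t r)
    (hden : (0 : ℤ) < 3 - 2 * d - 2 * k + ∑ r ∈ Finset.Icc 2 N, ((r : ℤ) - 1) * t r) :
    (((9 - 8 * k - 5 * d + ∑ r ∈ Finset.Icc 2 N, (3 * (r : ℤ) - 4) * t r : ℤ) : ℚ) /
      ((3 - 2 * d - 2 * k + ∑ r ∈ Finset.Icc 2 N, ((r : ℤ) - 1) * t r : ℤ) : ℚ)) < 8 / 3 := by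
  set M := max N 4 with hM
  have hNM : N ≤ M := le_max_left _ _
  have h4M : 4 ≤ M := le_max_right _ _
  have hext : ∀ (f : ℕ → ℤ) (a : ℕ),
      ∑ r ∈ Finset.Icc a N, f r * t r = ∑ r ∈ Finset.Icc a M, f r * t r := by
    intro f a
    apply Finset.sum_subset (Finset.Icc_subset_Icc_right hNM)
    intro r hr hnr
    have hr' := Finset.mem_Icc.mp hr
    have : N < r := by
      by_contra h
      exact hnr (Finset.mem_Icc.mpr ⟨hr'.1, le_of_not_gt h⟩)
    rw [hsupp r this]; simp
  have hsplit : ∀ (f : ℕ → ℤ),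
      ∑ r ∈ Finset.Icc 2 M, f r * t r
        = f 2 * t 2 + f 3 * t 3 + f 4 * t 4 + ∑ r ∈ Finset.Icc 5 M, f r * t r := by
    intro f
    have hu : Finset.Icc 2 4 ∪ Finset.Ioc 4 M = Finset.Icc 2 M := by
      ext x
      simp only [Finset.mem_union, Finset.mem_Icc, Finset.mem_Ioc]
      omega
    have hdisj : Disjoint (Finset.Icc 2 4) (Finset.Ioc 4 M) := by
      simp [Finset.disjoint_left, Finset.mem_Icc, Finset.mem_Ioc]
      omega
    rw [← hu, Finset.sum_union hdisj]
    have h24 : Finset.Icc 2 4 = ({2, 3, 4} : Finset ℕ) := by decide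
    have h5 : Finset.Ioc 4 M = Finset.Icc 5 M := by
      rw [← Finset.Icc_add_one_left_eq_Ioc]; rfl
    rw [h24, h5]
    simp [Finset.sum_insert, Finset.mem_insert]
    ring
  have e1 : ∑ r ∈ Finset.Icc 2 N, ((r : ℤ) - 1) * t r
      = ∑ r ∈ Finset.Icc 2 M, ((r : ℤ) - 1) * t r := hext _ 2
  have e2 : ∑ r ∈ Finset.Icc 2 N, (3 * (r : ℤ) - 4) * t r
      = ∑ r ∈ Finset.Icc 2 M, (3 * (r : ℤ) - 4) * t r := hext _ 2
  have e3 : ∑ r ∈ Finset.Icc 5 N, ((r : ℤ) - 4) * t r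
      = ∑ r ∈ Finset.Icc 5 M, ((r : ℤ) - 4) * t r := hext _ 5
  have s1 := hsplit (fun r => (r : ℤ) - 1)
  have s2 := hsplit (fun r => 3 * (r : ℤ) - 4)
  -- pointwise bound on the tail sums
  have htail : 3 * ∑ r ∈ Finset.Icc 5 M, (3 * (r : ℤ) - 4) * t r
      = (∑ r ∈ Finset.Icc 5 M, ((r : ℤ) - 4) * t r)
        + 8 * (∑ r ∈ Finset.Icc 5 M, ((r : ℤ) - 1) * t r) := by
    rw [Finset.mul_sum, Finset.mul_sum, ← Finset.sum_add_distrib]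
    apply Finset.sum_congr rfl
    intro r _
    ring
  have ht2 : (0 : ℤ) ≤ t 2 := Int.ofNat_nonneg _
  have ht3 : (0 : ℤ) ≤ t 3 := Int.ofNat_nonneg _
  have ht4 : (0 : ℤ) ≤ t 4 := Int.ofNat_nonneg _
  have hkz : (3 : ℤ) ≤ k := by exact_mod_cast hk
  have hdz : (0 : ℤ) ≤ d := Int.ofNat_nonneg _
  -- key integer inequality : 3 * num < 8 * den
  have key : 3 * (9 - 8 * (k : ℤ) - 5 * d + ∑ r ∈ Finset.Icc 2 N, (3 * (r : ℤ) - 4) * t r)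
      < 8 * (3 - 2 * (d : ℤ) - 2 * k + ∑ r ∈ Finset.Icc 2 N, ((r : ℤ) - 1) * t r) := by
    rw [e1, e2, s1, s2]
    rw [e3] at hHir
    push_cast at hHir ⊢
    linarith
  rw [div_lt_div_iff₀ (by exact_mod_cast hden) (by norm_num)]
  have : ((3 * (9 - 8 * (k : ℤ) - 5 * d + ∑ r ∈ Finset.Icc 2 N, (3 * (r : ℤ) - 4) * t r) : ℤ) : ℚ)
      < ((8 * (3 - 2 * (d : ℤ) - 2 * k + ∑ r ∈ Finset.Icc 2 N, ((r : ℤ) - 1) * t r) : ℤ) : ℚ) := by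
    exact_mod_cast key
  push_cast at this ⊢
  linarith
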